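/- Let P, Q ∈ SYT(r×c), n = rc, S = stack(P,Q), with x_{ij} the entry in row i, column j of Q, y_{ij} the entry in row i, column j of ∂(P), S_{kj} := {(x_{sj}, y_{tj}) : 1 ≤ s,t ≤ r, s+t−1 = k} for 1 ≤ k ≤ 2r−1, and S_{0,j} = S_{2r,j} := ∅. Then for each 1 ≤ j ≤ c: if r ≤ k ≤ 2r−1 then 𝒮(S_{kj}, ↗) = S_{k+1,j}, and if 1 ≤ k ≤ r then 𝒮(S_{kj}, ↙) = S_{k−1,j}. -/

import Mathlib

namespace PromRS

/-! ## Rectangular standard Young tableaux (as functions; 0-indexed cells; entries 1..R*C) -/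

/-- `T` is a standard Young tableau of rectangular shape with `R` rows and `C` columns:
rows and columns strictly increase, and the entries on the `R × C` rectangle are a
bijection onto `{1, …, R*C}`. -/
def IsSYT (R C : ℕ) (T : ℕ → ℕ → ℕ) : Prop :=
  (∀ i j, i < R → j + 1 < C → T i j < T i (j + 1)) ∧
  (∀ i j, i + 1 < R → j < C → T i j < T (i + 1) j) ∧
  Set.BijOn (fun p : ℕ × ℕ => T p.1 p.2) {p : ℕ × ℕ | p.1 < R ∧ p.2 < C} (Set.Icc 1 (R * C))

/-- Stacking: add `r*c` to every entry of `Q` and place the result below `P`. -/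
def stack (r c : ℕ) (P Q : ℕ → ℕ → ℕ) : ℕ → ℕ → ℕ := fun i j =>
  if i < r then P i j else Q (i - r) j + r * c

/-! ## Gromotion and promotion permutations -/

/-- Value of `T` at a cell, with `⊤` outside the `R × C` rectangle. -/
def ext (R C : ℕ) (T : ℕ → ℕ → ℕ) (p : ℕ × ℕ) : WithTop ℕ :=
  if p.1 < R ∧ p.2 < C then ((T p.1 p.2 : ℕ) : WithTop ℕ) else ⊤

/-- The jeu de taquin slide moves the empty cell to the smaller of its east/south neighbors. -/
def nextCell (R C : ℕ) (T : ℕ → ℕ → ℕ) (p : ℕ × ℕ) : ℕ × ℕ :=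
  if ext R C T (p.1, p.2 + 1) < ext R C T (p.1 + 1, p.2) then (p.1, p.2 + 1)
  else (p.1 + 1, p.2)

/-- The sliding path of the empty cell, starting at the top-left corner. -/
def slidePath (R C : ℕ) (T : ℕ → ℕ → ℕ) : ℕ → ℕ × ℕ
  | 0 => (0, 0)
  | k + 1 => nextCell R C T (slidePath R C T k)

def maxEntry (R C : ℕ) (T : ℕ → ℕ → ℕ) : ℕ :=
  ((Finset.range R) ×ˢ (Finset.range C)).sup fun p => T p.1 p.2

/-- Gromotion: delete the minimal entry (at the top-left corner), rectify by jeu de taquin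
slides, and fill the vacated outer corner with (current maximum) + 1; entries are not
decremented. -/
def gromotion (R C : ℕ) (T : ℕ → ℕ → ℕ) : ℕ → ℕ → ℕ := fun i j =>
  if i = R - 1 ∧ j = C - 1 then maxEntry R C T + 1
  else
    match (List.range (R + C - 2)).find? (fun k => decide (slidePath R C T k = (i, j))) with
    | some k => T (slidePath R C T (k + 1)).1 (slidePath R C T (k + 1)).2
    | none => T i j

/-- The entry that slides (up) into row `i` (1-indexed) during one gromotion slide of `T`:
the value of `T` at the first cell of the sliding path lying in 0-indexed row `i`. -/
def slideInto (R C : ℕ) (T : ℕ → ℕ → ℕ) (i : ℕ) : ℕ :=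
  match (List.range (R + C - 1)).find? (fun k => decide ((slidePath R C T k).1 = i)) with
  | some k => T (slidePath R C T k).1 (slidePath R C T k).2
  | none => 0

/-- The `i`-th promotion permutation of `T ∈ SYT(R × C)`: its value at `j` is the entry
that slides into row `i` when computing `gromotion^j(T)`, taken modulo `R*C` with
residues in `{1, …, R*C}`. -/
def promPerm (R C : ℕ) (T : ℕ → ℕ → ℕ) (i : ℕ) : ℕ → ℕ := fun j =>
  (slideInto R C ((gromotion R C)^[j - 1] T) i - 1) % (R * C) + 1

/-! ## Tableaux as lists of rows, Robinson–Schensted insertion -/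

/-- Entry of a list-of-rows tableau (0-indexed; `0` outside). -/
def entryL (T : List (List ℕ)) (i j : ℕ) : ℕ := (T.getD i []).getD j 0

/-- Convert a function tableau on an `R × C` rectangle to a list of rows. -/
def toListT (R C : ℕ) (T : ℕ → ℕ → ℕ) : List (List ℕ) :=
  (List.range R).map fun i => (List.range C).map fun j => T i j

/-- Transpose (conjugate) of a list-of-rows tableau. -/
def transposeT (T : List (List ℕ)) : List (List ℕ) :=
  (List.range (T.getD 0 []).length).map fun j => T.filterMap fun row => row[j]?

/-- Shape (row lengths) of a list-of-rows tableau. -/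
def shapeL (T : List (List ℕ)) : List ℕ := T.map List.length

/-- Standard Young tableau, as a list of rows: weakly decreasing nonempty row lengths,
rows and columns strictly increasing, and entries exactly `{1, …, N}` where `N` is the
number of cells. -/
def IsSYTList (T : List (List ℕ)) : Prop :=
  (∀ i, i + 1 < T.length → (T.getD (i + 1) []).length ≤ (T.getD i []).length) ∧
  (∀ row ∈ T, row ≠ []) ∧
  (∀ i j, i < T.length → j + 1 < (T.getD i []).length → entryL T i j < entryL T i (j + 1)) ∧
  (∀ i j, i + 1 < T.length → j < (T.getD (i + 1) []).length →
    entryL T i j < entryL T (i + 1) j) ∧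
  T.flatten.Nodup ∧ (∀ m, m ∈ T.flatten ↔ 1 ≤ m ∧ m ≤ T.flatten.length)

/-- Schensted row insertion of `x` into a tableau. -/
def rowInsert : List (List ℕ) → ℕ → List (List ℕ)
  | [], x => [[x]]
  | r :: rs, x =>
    match r.dropWhile (fun y => decide (y < x)) with
    | [] => (r ++ [x]) :: rs
    | y :: bs => (r.takeWhile (fun y => decide (y < x)) ++ x :: bs) :: rowInsert rs y

/-- The (0-indexed) row where the shape grew when passing from `P` to `P'`. -/
def rowOfNewCell (P P' : List (List ℕ)) : ℕ :=
  ((List.range P'.length).find? fun i =>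
    decide ((P'.getD i []).length ≠ (P.getD i []).length)).getD 0

def placeInRow (Q : List (List ℕ)) (r k : ℕ) : List (List ℕ) :=
  if r < Q.length then Q.set r (Q.getD r [] ++ [k]) else Q ++ [[k]]

/-- The Robinson–Schensted correspondence: the pair (insertion tableau, recording tableau)
of a word. -/
def RS (w : List ℕ) : List (List ℕ) × List (List ℕ) :=
  (List.range w.length).foldl
    (fun PQ i =>
      let P' := rowInsert PQ.1 (w.getD i 0)
      (P', placeInRow PQ.2 (rowOfNewCell PQ.1 P') (i + 1)))
    ([], [])

/-! ## Jeu de taquin on list tableaux; evacuation -/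

def extL (T : List (List ℕ)) (p : ℕ × ℕ) : WithTop ℕ :=
  if p.2 < (T.getD p.1 []).length then ((entryL T p.1 p.2 : ℕ) : WithTop ℕ) else ⊤

def nextCellL (T : List (List ℕ)) (p : ℕ × ℕ) : ℕ × ℕ :=
  if extL T (p.1, p.2 + 1) = ⊤ ∧ extL T (p.1 + 1, p.2) = ⊤ then p
  else if extL T (p.1, p.2 + 1) < extL T (p.1 + 1, p.2) then (p.1, p.2 + 1)
  else (p.1 + 1, p.2)

def jdtPath (T : List (List ℕ)) : ℕ → ℕ × ℕ
  | 0 => (0, 0)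
  | k + 1 => nextCellL T (jdtPath T k)

/-- The outer corner vacated when the minimal entry of `T` is deleted and the tableau is
rectified by jeu de taquin slides. -/
def vacated (T : List (List ℕ)) : ℕ × ℕ := jdtPath T T.flatten.length

/-- The value at cell `(i, j)` after the rectification slide. -/
def slidValue (T : List (List ℕ)) (i j : ℕ) : ℕ :=
  match (List.range T.flatten.length).find? (fun k =>
      decide (jdtPath T k = (i, j) ∧ jdtPath T (k + 1) ≠ (i, j))) with
  | some k => entryL T (jdtPath T (k + 1)).1 (jdtPath T (k + 1)).2
  | none => entryL T i j

/-- Delete the minimal entry of `T` and rectify. -/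
def delta (T : List (List ℕ)) : List (List ℕ) :=
  ((List.range T.length).map fun i =>
    (List.range ((T.getD i []).length - if i = (vacated T).1 then 1 else 0)).map fun j =>
      slidValue T i j).filter fun row => decide (row ≠ [])

/-- The entry of the evacuation `∂T` at cell `(i,j)`: `n + 1 - k` where the `k`-th
deletion-rectification vacates `(i,j)`. -/
def evacEntry (T : List (List ℕ)) (i j : ℕ) : ℕ :=
  match (List.range T.flatten.length).find? (fun k =>
      decide (vacated (delta^[k] T) = (i, j))) with
  | some k => T.flatten.length - k
  | none => 0

/-- Schützenberger evacuation `∂T` of a standard Young tableau. -/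
def evacL (T : List (List ℕ)) : List (List ℕ) :=
  (List.range T.length).map fun i =>
    (List.range (T.getD i []).length).map fun j => evacEntry T i j

/-! ## Shadow lines, skeleta, and Viennot's construction -/

def dirNE (a b : ℤ × ℤ) : Prop := a.1 ≤ b.1 ∧ a.2 ≤ b.2
def dirSE (a b : ℤ × ℤ) : Prop := a.1 ≤ b.1 ∧ b.2 ≤ a.2
def dirSW (a b : ℤ × ℤ) : Prop := b.1 ≤ a.1 ∧ b.2 ≤ a.2
def dirNW (a b : ℤ × ℤ) : Prop := b.1 ≤ a.1 ∧ a.2 ≤ b.2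

def minimalsUnder (d : ℤ × ℤ → ℤ × ℤ → Prop) (P : Set (ℤ × ℤ)) : Set (ℤ × ℤ) :=
  {p ∈ P | ∀ q ∈ P, d q p → q = p}

/-- `P` minus its first `j` shadow lines. -/
def shadowRest (d : ℤ × ℤ → ℤ × ℤ → Prop) (P : Set (ℤ × ℤ)) : ℕ → Set (ℤ × ℤ)
  | 0 => P
  | j + 1 => shadowRest d P j \ minimalsUnder d (shadowRest d P j)

/-- The `j`-th shadow line of `P` (1-indexed `j`). -/
def shadowLine (d : ℤ × ℤ → ℤ × ℤ → Prop) (P : Set (ℤ × ℤ)) (j : ℕ) : Set (ℤ × ℤ) :=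
  minimalsUnder d (shadowRest d P (j - 1))

/-- The skeleton of a single shadow line `L`: the minimal elements of the set of points
covered by the shadows of at least two points of `L`. -/
def lineSkeleton (d : ℤ × ℤ → ℤ × ℤ → Prop) (L : Set (ℤ × ℤ)) : Set (ℤ × ℤ) :=
  minimalsUnder d {x | ∃ p ∈ L, ∃ q ∈ L, p ≠ q ∧ d p x ∧ d q x}

/-- The skeleton of `P`: the union of the skeleta of its shadow lines. -/
def skeleton (d : ℤ × ℤ → ℤ × ℤ → Prop) (P : Set (ℤ × ℤ)) : Set (ℤ × ℤ) :=
  ⋃ j : ℕ, lineSkeleton d (shadowLine d P (j + 1))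

/-- The `k`-th iterated skeleton of `P`. -/
def skeletonIter (d : ℤ × ℤ → ℤ × ℤ → Prop) (P : Set (ℤ × ℤ)) (k : ℕ) : Set (ℤ × ℤ) :=
  (skeleton d)^[k] P

def IsMinSnd (L : Set (ℤ × ℤ)) (y : ℤ) : Prop := (∃ p ∈ L, p.2 = y) ∧ ∀ p ∈ L, y ≤ p.2
def IsMaxSnd (L : Set (ℤ × ℤ)) (y : ℤ) : Prop := (∃ p ∈ L, p.2 = y) ∧ ∀ p ∈ L, p.2 ≤ y
def IsMinFst (L : Set (ℤ × ℤ)) (x : ℤ) : Prop := (∃ p ∈ L, p.1 = x) ∧ ∀ p ∈ L, x ≤ p.1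
def IsMaxFst (L : Set (ℤ × ℤ)) (x : ℤ) : Prop := (∃ p ∈ L, p.1 = x) ∧ ∀ p ∈ L, p.1 ≤ x

/-- The set of exit coordinates (specified by `spec`) of the shadow lines of the `i`-th
iterated skeleton of `P` in direction `d`. -/
def exitSet (spec : Set (ℤ × ℤ) → ℤ → Prop) (d : ℤ × ℤ → ℤ × ℤ → Prop)
    (P : Set (ℤ × ℤ)) (i : ℕ) : Set ℤ :=
  {v | ∃ j : ℕ, spec (shadowLine d (skeletonIter d P i) (j + 1)) v}

/-- The word read off along one edge in Viennot's construction is the lattice word of the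
standard tableau `T`: there is an enumeration `e` of all shadow-line exit coordinates,
in the order prescribed by `lt`, such that the `m`-th exit belongs to a shadow line of the
`i`-th iterated skeleton exactly when the entry `m` of `T` lies in row `i + 1`. -/
def ReadsWord (spec : Set (ℤ × ℤ) → ℤ → Prop) (lt : ℤ → ℤ → Prop)
    (d : ℤ × ℤ → ℤ × ℤ → Prop) (P : Set (ℤ × ℤ)) (T : List (List ℕ)) : Prop :=
  ∃ e : Fin T.flatten.length → ℤ,
    (∀ a b : Fin T.flatten.length, a < b → lt (e a) (e b)) ∧
    (Set.range e = ⋃ i : ℕ, exitSet spec d P i) ∧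
    ∀ (m : Fin T.flatten.length) (i : ℕ), e m ∈ exitSet spec d P i →
      (T.findIdx fun row => row.contains (m.1 + 1)) + 1 = i + 1

/-- `𝒱(𝒫, ↗) = (Pt, Qt)`: the P-word is read bottom-to-top along the right edge
(east exit heights, which are the minimal `y`-coordinates of the lines), the Q-word
left-to-right along the top edge (north exits at minimal `x`-coordinates). -/
def ViennotNE (P : Set (ℤ × ℤ)) (Pt Qt : List (List ℕ)) : Prop :=
  ReadsWord IsMinSnd (· < ·) dirNE P Pt ∧ ReadsWord IsMinFst (· < ·) dirNE P Qt

/-- `𝒱(𝒫, ↘) = (Pt, Qt)`: P-word left-to-right along the bottom edge, Q-word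
top-to-bottom along the right edge. -/
def ViennotSE (P : Set (ℤ × ℤ)) (Pt Qt : List (List ℕ)) : Prop :=
  ReadsWord IsMinFst (· < ·) dirSE P Pt ∧ ReadsWord IsMaxSnd (· > ·) dirSE P Qt

/-- `𝒱(𝒫, ↙) = (Pt, Qt)`: P-word bottom-to-top along the left edge, Q-word
right-to-left along the bottom edge. -/
def ViennotSW (P : Set (ℤ × ℤ)) (Pt Qt : List (List ℕ)) : Prop :=
  ReadsWord IsMaxSnd (· < ·) dirSW P Pt ∧ ReadsWord IsMaxFst (· > ·) dirSW P Qt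

/-- `𝒱(𝒫, ↖) = (Pt, Qt)`: P-word right-to-left along the top edge, Q-word
bottom-to-top along the left edge. -/
def ViennotNW (P : Set (ℤ × ℤ)) (Pt Qt : List (List ℕ)) : Prop :=
  ReadsWord IsMaxFst (· > ·) dirNW P Pt ∧ ReadsWord IsMinSnd (· < ·) dirNW P Qt

/-- The point set `𝒫^NE(ρ)` of the northeast `n × n` block of the permutation matrix of
`ρ ∈ S_{2n}`, in Cartesian coordinates. -/
def pointsNE (n : ℕ) (f : ℕ → ℕ) : Set (ℤ × ℤ) :=
  {p | ∃ x : ℕ, 1 ≤ x ∧ x ≤ n ∧ n < f x ∧ p = ((f x : ℤ) - n, (n : ℤ) + 1 - x)}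

/-! ## Crossings and nestings of perfect matchings -/

/-- The matching `{a, f a}` on `{1, …, N}` has a `k`-crossing:
blocks `{a₁ < b₁}, …, {a_k < b_k}` with `a₁ < ⋯ < a_k < b₁ < ⋯ < b_k`. -/
def HasCrossing (f : ℕ → ℕ) (N k : ℕ) : Prop :=
  ∃ a b : Fin k → ℕ, StrictMono a ∧ StrictMono b ∧
    (∀ m, 1 ≤ a m ∧ b m ≤ N ∧ f (a m) = b m ∧ a m < b m) ∧
    ∀ m m' : Fin k, a m < b m'

/-- The matching `{a, f a}` on `{1, …, N}` has a `k`-nesting: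
blocks `{a₁ < b₁}, …, {a_k < b_k}` with `a₁ < ⋯ < a_k < b_k < ⋯ < b₁`. -/
def HasNesting (f : ℕ → ℕ) (N k : ℕ) : Prop :=
  ∃ a b : Fin k → ℕ, StrictMono a ∧ StrictAnti b ∧
    (∀ m, 1 ≤ a m ∧ b m ≤ N ∧ f (a m) = b m ∧ a m < b m) ∧
    ∀ m m' : Fin k, a m < b m'

/-! ## Local rules, the promotion–evacuation diagram, and the promotion matrix -/

/-- Partitions are encoded as lists of row lengths (fixed length, padded by zeros). -/
def sortDesc (l : List ℕ) : List ℕ := List.insertionSort (· ≥ ·) l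

/-- The sequence `ν + κ - λ` (pointwise). -/
def ruleSeq (lam nu ka : List ℕ) : List ℕ :=
  List.zipWith (fun a b => a - b) (List.zipWith (· + ·) nu ka) lam

/-- The local rule: `μ = sort(ν + κ - λ)`. -/
def localRule (lam nu ka : List ℕ) : List ℕ := sortDesc (ruleSeq lam nu ka)

/-- The decoration of a local rule square: `i` if `ν + κ - λ` fails to be sorted at rows
`i, i+1` (1-indexed), and `0` if no decoration is present. -/
def decoration (lam nu ka : List ℕ) : ℕ :=
  match (List.range (ruleSeq lam nu ka).length).find? (fun i =>
      decide ((ruleSeq lam nu ka).getD i 0 < (ruleSeq lam nu ka).getD (i + 1) 0)) with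
  | some i => i + 1
  | none => 0

/-- Fill in the next row of the promotion–evacuation diagram from the previous row `prev`:
the new row starts with the empty partition at position `s` and continues by local rules. -/
def nextRow (R : ℕ) (prev : ℕ → List ℕ) (s : ℕ) : ℕ → List ℕ
  | 0 => List.replicate R 0
  | x + 1 =>
    if x + 1 ≤ s then List.replicate R 0
    else localRule (prev x) (prev (x + 1)) (nextRow R prev s x)

/-- The `j`-th row of the promotion–evacuation diagram of `T ∈ SYT(R × C)`, as a function
of the column index (row `0` is the chain of `T`). -/
def PErow (R C : ℕ) (T : ℕ → ℕ → ℕ) : ℕ → ℕ → List ℕ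
  | 0 => fun x => (List.range R).map fun i =>
      ((Finset.range C).filter fun j => T i j ≤ min x (R * C)).card
  | j + 1 => nextRow R (PErow R C T j) (j + 1)

/-- For `S = stack(P, Q) ∈ SYT(2r × c)` and `n = r*c`, the `(n+1) × (n+1)` northeast block
of partitions `λ(x, y)` of `PEdiagram(S)` (Cartesian coordinates): `λ(x,y)` is the
diagram entry in row `n - y`, column `n + x`. -/
def lamBlock (r c : ℕ) (S : ℕ → ℕ → ℕ) (x y : ℕ) : List ℕ :=
  PErow (2 * r) c S (r * c - y) (r * c + x)

/-- The entry of `PM(S)^NE` at Cartesian coordinates `(x, y)`, `1 ≤ x, y ≤ n`: the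
decoration of the local rule square with corners `λ(x-1, y-1)`, `λ(x-1, y)`, `λ(x, y-1)`,
`λ(x, y)`. -/
def PMNE (r c : ℕ) (S : ℕ → ℕ → ℕ) (x y : ℕ) : ℕ :=
  decoration (lamBlock r c S (x - 1) y) (lamBlock r c S x y) (lamBlock r c S (x - 1) (y - 1))

/-- Chain of partitions of a list tableau: shape of the entries `≤ m`. -/
def chainOfL (T : List (List ℕ)) (m : ℕ) : List ℕ :=
  T.map fun row => (row.filter fun a => decide (a ≤ m)).length

/-- Column height `#{i : j < l i}` of a partition. -/
def colHeight (l : List ℕ) (j : ℕ) : ℕ := (l.filter fun a => decide (j < a)).length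

/-- Vertical sum `l +' m` of two partitions (stack the columns of `m` onto those of `l`),
computed inside a `rows × cols` bounding box. -/
def vsum (rows cols : ℕ) (l m : List ℕ) : List ℕ :=
  (List.range rows).map fun i =>
    ((List.range cols).filter fun j => decide (i < colHeight l j + colHeight m j)).length

/-! ## The point sets `S_k` and `S_{kj}` -/

/-- `x_{sj}`: the entry of `Q` in row `s`, column `j` (1-indexed). -/
def xEnt (Q : ℕ → ℕ → ℕ) (s j : ℕ) : ℤ := (Q (s - 1) (j - 1) : ℤ)

/-- `y_{tj}`: the entry of `∂(P)` in row `t`, column `j` (1-indexed). -/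
def yEnt (r c : ℕ) (P : ℕ → ℕ → ℕ) (t j : ℕ) : ℤ :=
  (entryL (evacL (toListT r c P)) (t - 1) (j - 1) : ℤ)

def Skj (r c : ℕ) (P Q : ℕ → ℕ → ℕ) (k j : ℕ) : Set (ℤ × ℤ) :=
  {p | ∃ s t : ℕ, 1 ≤ s ∧ s ≤ r ∧ 1 ≤ t ∧ t ≤ r ∧ s + t - 1 = k ∧
    p = (xEnt Q s j, yEnt r c P t j)}

def Sk (r c : ℕ) (P Q : ℕ → ℕ → ℕ) (k : ℕ) : Set (ℤ × ℤ) :=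
  ⋃ j ∈ Set.Icc 1 c, Skj r c P Q k j

/-- A southeast chain of `k` ones in the matrix `U` (rows increase, columns increase),
contained in a rectangle that fully fits into the strictly upper triangular part of the
`N × N` matrix. -/
def HasSEChain (U : ℕ → ℕ → ℕ) (N k : ℕ) : Prop :=
  ∃ a b : Fin k → ℕ, StrictMono a ∧ StrictMono b ∧ (∀ m, U (a m) (b m) = 1) ∧
    ∃ r₁ r₂ c₁ c₂ : ℕ, 1 ≤ r₁ ∧ r₂ < c₁ ∧ c₂ ≤ N ∧
      ∀ m, r₁ ≤ a m ∧ a m ≤ r₂ ∧ c₁ ≤ b m ∧ b m ≤ c₂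

/-- A southwest chain of `k` ones in the matrix `U` (rows increase, columns decrease),
contained in a rectangle that fully fits into the strictly upper triangular part of the
`N × N` matrix. -/
def HasSWChain (U : ℕ → ℕ → ℕ) (N k : ℕ) : Prop :=
  ∃ a b : Fin k → ℕ, StrictMono a ∧ StrictAnti b ∧ (∀ m, U (a m) (b m) = 1) ∧
    ∃ r₁ r₂ c₁ c₂ : ℕ, 1 ≤ r₁ ∧ r₂ < c₁ ∧ c₂ ≤ N ∧
      ∀ m, r₁ ≤ a m ∧ a m ≤ r₂ ∧ c₁ ≤ b m ∧ b m ≤ c₂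

/-! ### Auxiliary development for Statement 16 -/

private lemma getD_map_range {α : Type*} (f : ℕ → α) {n i : ℕ} (hi : i < n) (d : α) :
    ((List.range n).map f).getD i d = f i := by
  rw [List.getD_eq_getElem?_getD]
  simp [List.getElem?_map, List.getElem?_range, hi]

/-- Row length of a list tableau. -/
def rlen (T : List (List ℕ)) (i : ℕ) : ℕ := (T.getD i []).length

/-- Cell `p` lies in the shape of `T`. -/
def inSh (T : List (List ℕ)) (p : ℕ × ℕ) : Prop := p.2 < rlen T p.1

/-- Shape-only well-formedness: weakly decreasing row lengths, nonempty rows. -/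
def Shapely (T : List (List ℕ)) : Prop :=
  (∀ i, i + 1 < T.length → rlen T (i + 1) ≤ rlen T i) ∧ ∀ row ∈ T, row ≠ []

lemma rlen_eq_zero {T : List (List ℕ)} {i : ℕ} (h : T.length ≤ i) : rlen T i = 0 := by
  unfold rlen; rw [List.getD_eq_default _ _ h]; rfl

lemma lt_length_of_inSh {T : List (List ℕ)} {p : ℕ × ℕ} (h : inSh T p) : p.1 < T.length := by
  by_contra hc
  push_neg at hc
  have := rlen_eq_zero (T := T) (i := p.1) hc
  unfold inSh at h
  omega

lemma rlen_pos {T : List (List ℕ)} (hS : Shapely T) {i : ℕ} (hi : i < T.length) :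
    1 ≤ rlen T i := by
  have hmem : T.getD i [] ∈ T := by
    rw [List.getD_eq_getElem _ _ hi]; exact List.getElem_mem _
  exact List.length_pos_iff.mpr (hS.2 _ hmem)

lemma extL_eq_top_iff {T : List (List ℕ)} {p : ℕ × ℕ} : extL T p = ⊤ ↔ ¬ inSh T p := by
  unfold extL inSh rlen
  split
  next h => exact iff_of_false (by simp) (not_not_intro h)
  next h => exact iff_of_true rfl h

/-- A terminal (outer-corner) position for the jdt path. -/
def Term (T : List (List ℕ)) (p : ℕ × ℕ) : Prop :=
  ¬ inSh T (p.1, p.2 + 1) ∧ ¬ inSh T (p.1 + 1, p.2)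

lemma next_of_term {T : List (List ℕ)} {p : ℕ × ℕ} (h : Term T p) : nextCellL T p = p := by
  unfold nextCellL
  rw [if_pos ⟨extL_eq_top_iff.mpr h.1, extL_eq_top_iff.mpr h.2⟩]

lemma nextCellL_cases (T : List (List ℕ)) (p : ℕ × ℕ) :
    (nextCellL T p = p ∧ Term T p) ∨
    (inSh T (nextCellL T p) ∧ (nextCellL T p).1 + (nextCellL T p).2 = p.1 + p.2 + 1) := by
  unfold nextCellL
  by_cases h : extL T (p.1, p.2 + 1) = ⊤ ∧ extL T (p.1 + 1, p.2) = ⊤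
  · rw [if_pos h]
    exact Or.inl ⟨rfl, extL_eq_top_iff.mp h.1, extL_eq_top_iff.mp h.2⟩
  · rw [if_neg h]
    by_cases h2 : extL T (p.1, p.2 + 1) < extL T (p.1 + 1, p.2)
    · rw [if_pos h2]
      right
      have hne : extL T (p.1, p.2 + 1) ≠ ⊤ := ne_top_of_lt h2
      refine ⟨?_, by omega⟩
      by_contra hc
      exact hne (extL_eq_top_iff.mpr hc)
    · rw [if_neg h2]
      right
      have hs : extL T (p.1 + 1, p.2) ≠ ⊤ := by
        intro htop
        have he : extL T (p.1, p.2 + 1) ≠ ⊤ := fun he => h ⟨he, htop⟩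
        exact h2 (htop ▸ lt_top_iff_ne_top.mpr he)
      refine ⟨?_, by omega⟩
      by_contra hc
      exact hs (extL_eq_top_iff.mpr hc)

lemma path_inSh {T : List (List ℕ)} (hS : Shapely T) (hne : T ≠ []) :
    ∀ k, inSh T (jdtPath T k) := by
  intro k
  induction k with
  | zero =>
    have h0 : 0 < T.length := List.length_pos_iff.mpr hne
    exact rlen_pos hS h0
  | succ k ih =>
    have : jdtPath T (k + 1) = nextCellL T (jdtPath T k) := rfl
    rw [this]
    rcases nextCellL_cases T (jdtPath T k) with ⟨heq, _⟩ | ⟨hin, _⟩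
    · rw [heq]; exact ih
    · exact hin

lemma term_or_ge {T : List (List ℕ)} :
    ∀ k, Term T (jdtPath T k) ∨ k ≤ (jdtPath T k).1 + (jdtPath T k).2 := by
  intro k
  induction k with
  | zero => exact Or.inr (Nat.zero_le _)
  | succ k ih =>
    have hstep : jdtPath T (k + 1) = nextCellL T (jdtPath T k) := rfl
    rcases nextCellL_cases T (jdtPath T k) with ⟨heq, hterm⟩ | ⟨_, hsum⟩
    · left; rw [hstep, heq]; exact hterm
    · rcases ih with hterm | hge
      · left; rw [hstep, next_of_term hterm]; exact hterm
      · right; rw [hstep]; omega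

lemma flatten_bound :
    ∀ (T : List (List ℕ)), (∀ row ∈ T, row ≠ []) →
      ∀ i j, j < rlen T i → i + j + 1 ≤ T.flatten.length := by
  intro T
  induction T with
  | nil =>
    intro _ i j hj
    exfalso
    have : rlen ([] : List (List ℕ)) i = 0 := rlen_eq_zero (by simp)
    omega
  | cons row rs ih =>
    intro hne i j hj
    rw [List.flatten_cons, List.length_append]
    cases i with
    | zero =>
      have : rlen (row :: rs) 0 = row.length := rfl
      omega
    | succ i =>
      have h1 : 1 ≤ row.length := List.length_pos_iff.mpr (hne row List.mem_cons_self)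
      have hj' : j < rlen rs i := by
        have : rlen (row :: rs) (i + 1) = rlen rs i := rfl
        omega
      have h2 := ih (fun r hr => hne r (List.mem_cons_of_mem _ hr)) i j hj'
      omega

lemma flatten_len_sum :
    ∀ (T : List (List ℕ)), T.flatten.length = ∑ i ∈ Finset.range T.length, rlen T i := by
  intro T
  induction T with
  | nil => simp
  | cons row rs ih =>
    rw [List.flatten_cons, List.length_append, List.length_cons, Finset.sum_range_succ']
    have h0 : rlen (row :: rs) 0 = row.length := rfl
    have hs : ∀ i, rlen (row :: rs) (i + 1) = rlen rs i := fun i => rfl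
    simp only [hs, h0]
    omega

lemma sum_rlen_of_le {T : List (List ℕ)} {L : ℕ} (h : T.length ≤ L) :
    ∑ i ∈ Finset.range L, rlen T i = T.flatten.length := by
  rw [flatten_len_sum]
  exact (Finset.sum_subset (Finset.range_subset_range.mpr h)
    (fun x _ hx => rlen_eq_zero (by simpa using hx))).symm

lemma vacated_spec {T : List (List ℕ)} (hS : Shapely T) (hne : T ≠ []) :
    inSh T (vacated T) ∧ Term T (vacated T) := by
  have h1 : inSh T (jdtPath T T.flatten.length) := path_inSh hS hne _
  have hvac : vacated T = jdtPath T T.flatten.length := rfl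
  rw [hvac]
  refine ⟨h1, ?_⟩
  rcases term_or_ge (T := T) T.flatten.length with h | h
  · exact h
  · exfalso
    have hb := flatten_bound T hS.2 (jdtPath T T.flatten.length).1
      (jdtPath T T.flatten.length).2 h1
    omega

lemma vac_facts {T : List (List ℕ)} (hS : Shapely T) (hne : T ≠ []) :
    (vacated T).1 < T.length ∧ rlen T (vacated T).1 = (vacated T).2 + 1 ∧
      rlen T ((vacated T).1 + 1) ≤ (vacated T).2 := by
  obtain ⟨hin, ht1, ht2⟩ := vacated_spec hS hne
  have hlt := lt_length_of_inSh hin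
  unfold inSh at hin ht1 ht2
  simp only at hin ht1 ht2
  exact ⟨hlt, by omega, by omega⟩

lemma delta_eq_filter (T : List (List ℕ)) :
    delta T = ((List.range T.length).map fun i =>
      (List.range (rlen T i - if i = (vacated T).1 then 1 else 0)).map fun j =>
        slidValue T i j).filter fun row => decide (row ≠ []) := rfl

lemma rlen_delta {T : List (List ℕ)} (hS : Shapely T) (hne : T ≠ []) (i : ℕ) :
    rlen (delta T) i = rlen T i - (if i = (vacated T).1 then 1 else 0) := by
  obtain ⟨hvlt, hvr, hvs⟩ := vac_facts hS hne
  set g : ℕ → List ℕ := fun i =>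
    (List.range (rlen T i - if i = (vacated T).1 then 1 else 0)).map fun j =>
      slidValue T i j with hg
  have hD0 : delta T = ((List.range T.length).map g).filter fun row => decide (row ≠ []) :=
    delta_eq_filter T
  have hglen : ∀ i, (g i).length = rlen T i - (if i = (vacated T).1 then 1 else 0) := by
    intro i; rw [hg]; simp
  by_cases hv2 : 1 ≤ (vacated T).2
  · -- no row becomes empty
    have hall : ∀ row ∈ (List.range T.length).map g, (fun row => decide (row ≠ [])) row = true := by
      intro row hrow
      rw [List.mem_map] at hrow
      obtain ⟨i', hi', rfl⟩ := hrow
      rw [List.mem_range] at hi'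
      have hpos := rlen_pos hS hi'
      have : 1 ≤ (g i').length := by
        rw [hglen]
        by_cases he : i' = (vacated T).1
        · rw [if_pos he]
          have hri : rlen T i' = (vacated T).2 + 1 := by rw [he]; exact hvr
          omega
        · rw [if_neg he]; omega
      simp only [decide_eq_true_eq]
      exact List.ne_nil_of_length_pos (by omega)
    have hDeq : delta T = (List.range T.length).map g := by
      rw [hD0, List.filter_eq_self.mpr hall]
    rw [hDeq]
    by_cases hi : i < T.length
    · unfold rlen
      rw [getD_map_range g hi]
      exact hglen i
    · push_neg at hi
      have h1 : rlen ((List.range T.length).map g) i = 0 :=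
        rlen_eq_zero (by simpa using hi)
      have h2 : rlen T i = 0 := rlen_eq_zero hi
      omega
  · -- the vacated row becomes empty; it is the last row
    have hv2' : (vacated T).2 = 0 := by omega
    have hlast : (vacated T).1 + 1 = T.length := by
      rcases Nat.lt_or_ge ((vacated T).1 + 1) T.length with h | h
      · have := rlen_pos hS h; omega
      · omega
    have hgv : g (vacated T).1 = [] := by
      have hlen0 : (g (vacated T).1).length = 0 := by
        rw [hglen, if_pos rfl, hvr, hv2']
      exact List.length_eq_zero_iff.mp hlen0
    have hall : ∀ row ∈ (List.range (vacated T).1).map g,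
        (fun row => decide (row ≠ [])) row = true := by
      intro row hrow
      rw [List.mem_map] at hrow
      obtain ⟨i', hi', rfl⟩ := hrow
      rw [List.mem_range] at hi'
      have hpos := rlen_pos hS (by omega : i' < T.length)
      have : 1 ≤ (g i').length := by
        rw [hglen, if_neg (by omega : i' ≠ (vacated T).1)]; omega
      simp only [decide_eq_true_eq]
      exact List.ne_nil_of_length_pos (by omega)
    have hDeq : delta T = (List.range (vacated T).1).map g := by
      rw [hD0, ← hlast, List.range_succ, List.map_append, List.filter_append,
        List.filter_eq_self.mpr hall]
      simp [hgv]
    rw [hDeq]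
    by_cases hi : i < (vacated T).1
    · unfold rlen
      rw [getD_map_range g hi]
      exact hglen i
    · push_neg at hi
      have h1 : rlen ((List.range (vacated T).1).map g) i = 0 :=
        rlen_eq_zero (by simpa using hi)
      by_cases he : i = (vacated T).1
      · have hri : rlen T i = (vacated T).2 + 1 := by rw [he]; exact hvr
        rw [h1, if_pos he]; omega
      · have h2 : rlen T i = 0 := rlen_eq_zero (by omega)
        rw [h1, if_neg he]; omega

lemma length_delta_le (T : List (List ℕ)) : (delta T).length ≤ T.length := by
  rw [delta_eq_filter]
  exact le_trans (List.length_filter_le _ _) (by simp)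

lemma shapely_delta {T : List (List ℕ)} (hS : Shapely T) (hne : T ≠ []) :
    Shapely (delta T) := by
  obtain ⟨hvlt, hvr, hvs⟩ := vac_facts hS hne
  constructor
  · intro i hi
    rw [rlen_delta hS hne, rlen_delta hS hne]
    by_cases h : i + 1 < T.length
    · have hmono := hS.1 i h
      by_cases h1 : i = (vacated T).1
      · rw [if_neg (by omega : ¬ i + 1 = (vacated T).1), if_pos h1]
        have hri : rlen T i = (vacated T).2 + 1 := by rw [h1]; exact hvr
        have hrs : rlen T (i + 1) ≤ (vacated T).2 := by rw [h1]; exact hvs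
        omega
      · rw [if_neg h1]
        by_cases h2 : i + 1 = (vacated T).1
        · rw [if_pos h2]; omega
        · rw [if_neg h2]; omega
    · have h0 : rlen T (i + 1) = 0 := rlen_eq_zero (by omega)
      rw [h0]; simp
  · intro row hrow
    rw [delta_eq_filter] at hrow
    exact of_decide_eq_true (List.mem_filter.mp hrow).2

lemma flatten_delta {T : List (List ℕ)} (hS : Shapely T) (hne : T ≠ []) :
    (delta T).flatten.length + 1 = T.flatten.length := by
  obtain ⟨hvlt, hvr, hvs⟩ := vac_facts hS hne
  rw [← sum_rlen_of_le (length_delta_le T), ← sum_rlen_of_le (le_refl T.length)]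
  rw [Finset.sum_congr rfl (fun i _ => rlen_delta hS hne i)]
  have hsplit : ∀ i ∈ Finset.range T.length,
      rlen T i - (if i = (vacated T).1 then 1 else 0) + (if i = (vacated T).1 then 1 else 0)
        = rlen T i := by
    intro i _
    by_cases he : i = (vacated T).1
    · have hri : rlen T i = (vacated T).2 + 1 := by rw [he]; exact hvr
      rw [if_pos he]; omega
    · rw [if_neg he]; omega
  have hone : ∑ i ∈ Finset.range T.length, (if i = (vacated T).1 then 1 else 0) = 1 := by
    rw [Finset.sum_ite_eq' (Finset.range T.length) (vacated T).1 (fun _ => 1)]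
    rw [if_pos (Finset.mem_range.mpr hvlt)]
  calc ∑ i ∈ Finset.range T.length, (rlen T i - (if i = (vacated T).1 then 1 else 0)) + 1
      = ∑ i ∈ Finset.range T.length, (rlen T i - (if i = (vacated T).1 then 1 else 0))
        + ∑ i ∈ Finset.range T.length, (if i = (vacated T).1 then 1 else 0) := by rw [hone]
    _ = ∑ i ∈ Finset.range T.length,
          ((rlen T i - (if i = (vacated T).1 then 1 else 0)) + (if i = (vacated T).1 then 1 else 0)) :=
        (Finset.sum_add_distrib).symm
    _ = ∑ i ∈ Finset.range T.length, rlen T i := Finset.sum_congr rfl hsplit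

lemma inSh_delta {T : List (List ℕ)} (hS : Shapely T) (hne : T ≠ []) {i j : ℕ} :
    inSh (delta T) (i, j) ↔ inSh T (i, j) ∧ (i, j) ≠ vacated T := by
  obtain ⟨hvlt, hvr, hvs⟩ := vac_facts hS hne
  unfold inSh
  simp only []
  rw [rlen_delta hS hne]
  by_cases he : i = (vacated T).1
  · rw [if_pos he]
    have hri : rlen T i = (vacated T).2 + 1 := by rw [he]; exact hvr
    constructor
    · intro hj
      refine ⟨by omega, fun hc => ?_⟩
      have : j = (vacated T).2 := congrArg Prod.snd hc
      omega
    · rintro ⟨hj, hne2⟩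
      have : j ≠ (vacated T).2 := fun e => hne2 (Prod.ext he e)
      omega
  · rw [if_neg he]
    constructor
    · intro hj
      exact ⟨by omega, fun hc => he (congrArg Prod.fst hc)⟩
    · rintro ⟨hj, _⟩; omega

lemma ne_nil_of_inSh {T : List (List ℕ)} {p : ℕ × ℕ} (h : inSh T p) : T ≠ [] := by
  have := lt_length_of_inSh h
  exact List.ne_nil_of_length_pos (by omega)

lemma exists_vac :
    ∀ n (T : List (List ℕ)), T.flatten.length ≤ n → Shapely T → ∀ i j, inSh T (i, j) →
      ∃ k, k < T.flatten.length ∧ vacated (delta^[k] T) = (i, j) := by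
  intro n
  induction n with
  | zero =>
    intro T hn hS i j h
    have := flatten_bound T hS.2 i j h
    omega
  | succ n ih =>
    intro T hn hS i j h
    have hne : T ≠ [] := ne_nil_of_inSh h
    have hpos : 1 ≤ T.flatten.length := by
      have := flatten_bound T hS.2 i j h; omega
    by_cases hv : vacated T = (i, j)
    · exact ⟨0, by omega, hv⟩
    · have h' : inSh (delta T) (i, j) :=
        (inSh_delta hS hne).mpr ⟨h, fun e => hv e.symm⟩
      have hflat := flatten_delta hS hne
      obtain ⟨k, hk, hvk⟩ := ih (delta T) (by omega) (shapely_delta hS hne) i j h'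
      refine ⟨k + 1, by omega, ?_⟩
      rw [Function.iterate_succ_apply]
      exact hvk

lemma vac_below_first :
    ∀ k (T : List (List ℕ)), Shapely T → ∀ i j, inSh T (i, j) → inSh T (i + 1, j) →
      vacated (delta^[k] T) = (i, j) → ∃ k', k' < k ∧ vacated (delta^[k'] T) = (i + 1, j) := by
  intro k
  induction k with
  | zero =>
    intro T hS i j h1 h2 hv
    exfalso
    have hne : T ≠ [] := ne_nil_of_inSh h1
    have hterm := (vacated_spec hS hne).2
    simp only [Function.iterate_zero_apply] at hv
    rw [hv] at hterm
    exact hterm.2 h2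
  | succ k ih =>
    intro T hS i j h1 h2 hv
    have hne : T ≠ [] := ne_nil_of_inSh h1
    by_cases hb : vacated T = (i + 1, j)
    · exact ⟨0, Nat.succ_pos _, hb⟩
    · have ha : vacated T ≠ (i, j) := by
        intro e
        have hterm := (vacated_spec hS hne).2
        rw [e] at hterm
        exact hterm.2 h2
      have h1' : inSh (delta T) (i, j) := (inSh_delta hS hne).mpr ⟨h1, fun e => ha e.symm⟩
      have h2' : inSh (delta T) (i + 1, j) := (inSh_delta hS hne).mpr ⟨h2, fun e => hb e.symm⟩
      have hv' : vacated (delta^[k] (delta T)) = (i, j) := by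
        rw [← Function.iterate_succ_apply]
        exact hv
      obtain ⟨k', hk', hvk'⟩ := ih (delta T) (shapely_delta hS hne) i j h1' h2' hv'
      refine ⟨k' + 1, by omega, ?_⟩
      rw [Function.iterate_succ_apply]
      exact hvk'

lemma find?_range {p : ℕ → Bool} :
    ∀ {n k : ℕ}, k < n → p k = true → (∀ m, m < k → p m = false) →
      (List.range n).find? p = some k := by
  intro n
  induction n with
  | zero => intro k hk; omega
  | succ n ih =>
    intro k hk hpk hmin
    rw [List.range_succ, List.find?_append]
    rcases Nat.lt_or_ge k n with h | h
    · rw [ih h hpk hmin]; rfl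
    · have hkn : k = n := by omega
      have hnone : (List.range n).find? p = none := by
        rw [List.find?_eq_none]
        intro x hx
        rw [List.mem_range] at hx
        rw [hmin x (by omega)]
        simp
      rw [hnone]
      subst hkn
      simp [List.find?, hpk]

lemma evacEntry_lt {T : List (List ℕ)} {i j : ℕ} (hS : Shapely T)
    (h1 : inSh T (i, j)) (h2 : inSh T (i + 1, j)) :
    evacEntry T i j < evacEntry T (i + 1) j := by
  obtain ⟨ka, hka, hva⟩ := exists_vac T.flatten.length T le_rfl hS i j h1
  obtain ⟨kb, hkb, hvb⟩ := exists_vac T.flatten.length T le_rfl hS (i + 1) j h2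
  have pa : ∃ k, vacated (delta^[k] T) = (i, j) := ⟨ka, hva⟩
  have pb : ∃ k, vacated (delta^[k] T) = (i + 1, j) := ⟨kb, hvb⟩
  have hk0 : Nat.find pa ≤ ka := Nat.find_min' pa hva
  have hk1 : Nat.find pb ≤ kb := Nat.find_min' pb hvb
  have hfa : (List.range T.flatten.length).find?
      (fun k => decide (vacated (delta^[k] T) = (i, j))) = some (Nat.find pa) :=
    find?_range (by omega) (decide_eq_true (Nat.find_spec pa))
      (fun m hm => decide_eq_false (Nat.find_min pa hm))
  have hfb : (List.range T.flatten.length).find?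
      (fun k => decide (vacated (delta^[k] T) = (i + 1, j))) = some (Nat.find pb) :=
    find?_range (by omega) (decide_eq_true (Nat.find_spec pb))
      (fun m hm => decide_eq_false (Nat.find_min pb hm))
  obtain ⟨k', hk'lt, hk'v⟩ := vac_below_first (Nat.find pa) T hS i j h1 h2 (Nat.find_spec pa)
  have hble : Nat.find pb ≤ k' := Nat.find_min' pb hk'v
  unfold evacEntry
  rw [hfa, hfb]
  simp only []
  omega

lemma toListT_length (R C : ℕ) (T : ℕ → ℕ → ℕ) : (toListT R C T).length = R := by
  unfold toListT; simp

lemma rlen_toListT {R C : ℕ} (T : ℕ → ℕ → ℕ) {i : ℕ} (hi : i < R) :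
    rlen (toListT R C T) i = C := by
  unfold rlen toListT
  rw [getD_map_range _ hi]
  simp

lemma shapely_toListT {R C : ℕ} (T : ℕ → ℕ → ℕ) (hC : 1 ≤ C) :
    Shapely (toListT R C T) := by
  constructor
  · intro i hi
    rw [toListT_length] at hi
    rw [rlen_toListT T (by omega), rlen_toListT T (by omega)]
  · intro row hrow
    unfold toListT at hrow
    rw [List.mem_map] at hrow
    obtain ⟨i, _, rfl⟩ := hrow
    have : ((List.range C).map fun j => T i j).length = C := by simp
    exact List.ne_nil_of_length_pos (by omega)

lemma entryL_evacL {T : List (List ℕ)} {a b : ℕ} (ha : a < T.length) (hb : b < rlen T a) :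
    entryL (evacL T) a b = evacEntry T a b := by
  unfold entryL evacL
  rw [getD_map_range _ ha]
  exact getD_map_range _ hb 0

lemma yEnt_adj {r c : ℕ} (P : ℕ → ℕ → ℕ) {j t : ℕ} (hj1 : 1 ≤ j) (hjc : j ≤ c)
    (ht1 : 1 ≤ t) (htr : t < r) : yEnt r c P t j < yEnt r c P (t + 1) j := by
  have hc : 1 ≤ c := le_trans hj1 hjc
  set T0 := toListT r c P with hT0
  have hS : Shapely T0 := shapely_toListT P hc
  have hlen : T0.length = r := toListT_length r c P
  have h1 : inSh T0 (t - 1, j - 1) := by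
    show j - 1 < rlen T0 (t - 1)
    rw [rlen_toListT P (by omega)]
    omega
  have h2 : inSh T0 (t - 1 + 1, j - 1) := by
    show j - 1 < rlen T0 (t - 1 + 1)
    rw [rlen_toListT P (by omega)]
    omega
  have key := evacEntry_lt hS h1 h2
  unfold yEnt
  rw [entryL_evacL (by rw [toListT_length]; omega) (by rw [rlen_toListT P (by omega)]; omega),
    entryL_evacL (by rw [toListT_length]; omega) (by rw [rlen_toListT P (by omega)]; omega)]
  have heq : t + 1 - 1 = t - 1 + 1 := by omega
  rw [heq]
  exact_mod_cast key

lemma yEnt_mono {r c : ℕ} (P : ℕ → ℕ → ℕ) {j : ℕ} (hj1 : 1 ≤ j) (hjc : j ≤ c) :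
    ∀ t₁ t₂, 1 ≤ t₁ → t₂ ≤ r → t₁ < t₂ → yEnt r c P t₁ j < yEnt r c P t₂ j := by
  intro t₁ t₂
  induction t₂ with
  | zero => omega
  | succ t₂ ih =>
    intro h1 h2 hlt
    rcases Nat.lt_or_ge t₁ t₂ with h | h
    · exact lt_trans (ih h1 (by omega) h) (yEnt_adj P hj1 hjc (by omega) (by omega))
    · have : t₁ = t₂ := by omega
      subst this
      exact yEnt_adj P hj1 hjc h1 (by omega)

lemma xEnt_mono {r c : ℕ} {Q : ℕ → ℕ → ℕ} (hQ : IsSYT r c Q) {j : ℕ}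
    (hj1 : 1 ≤ j) (hjc : j ≤ c) :
    ∀ s₁ s₂, 1 ≤ s₁ → s₂ ≤ r → s₁ < s₂ → xEnt Q s₁ j < xEnt Q s₂ j := by
  have hadj : ∀ s, 1 ≤ s → s < r → xEnt Q s j < xEnt Q (s + 1) j := by
    intro s h1 h2
    have := hQ.2.1 (s - 1) (j - 1) (by omega) (by omega)
    unfold xEnt
    have heq : s + 1 - 1 = s - 1 + 1 := by omega
    rw [heq]
    exact_mod_cast this
  intro s₁ s₂
  induction s₂ with
  | zero => omega
  | succ s₂ ih =>
    intro h1 h2 hlt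
    rcases Nat.lt_or_ge s₁ s₂ with h | h
    · exact lt_trans (ih h1 (by omega) h) (hadj s₂ (by omega) (by omega))
    · have : s₁ = s₂ := by omega
      subst this
      exact hadj s₁ h1 (by omega)

/-! ### Abstract skeleton computation for antichain point sets -/

/-- The abstract point set `S_k` built from two strictly increasing sequences. -/
def SSet (X Y : ℕ → ℤ) (r k : ℕ) : Set (ℤ × ℤ) :=
  {p | ∃ s t : ℕ, 1 ≤ s ∧ s ≤ r ∧ 1 ≤ t ∧ t ≤ r ∧ s + t - 1 = k ∧ p = (X s, Y t)}

def MonoOn (X : ℕ → ℤ) (r : ℕ) : Prop :=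
  ∀ s₁ s₂, 1 ≤ s₁ → s₂ ≤ r → s₁ < s₂ → X s₁ < X s₂

lemma MonoOn.le {X : ℕ → ℤ} {r : ℕ} (h : MonoOn X r) {s₁ s₂ : ℕ}
    (h1 : 1 ≤ s₁) (h2 : s₂ ≤ r) (h3 : s₁ ≤ s₂) : X s₁ ≤ X s₂ := by
  rcases Nat.eq_or_lt_of_le h3 with he | hl
  · rw [he]
  · exact le_of_lt (h s₁ s₂ h1 h2 hl)

lemma dirNE_intro {a b : ℤ × ℤ} (h1 : a.1 ≤ b.1) (h2 : a.2 ≤ b.2) : dirNE a b :=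
  And.intro h1 h2

lemma dirNE_elim {a b : ℤ × ℤ} (h : dirNE a b) : a.1 ≤ b.1 ∧ a.2 ≤ b.2 := h

lemma dirSW_intro {a b : ℤ × ℤ} (h1 : b.1 ≤ a.1) (h2 : b.2 ≤ a.2) : dirSW a b :=
  And.intro h1 h2

lemma dirSW_elim {a b : ℤ × ℤ} (h : dirSW a b) : b.1 ≤ a.1 ∧ b.2 ≤ a.2 := h

/-- Points covered by the shadows of two distinct points of `L`. -/
def Cov (d : ℤ × ℤ → ℤ × ℤ → Prop) (L : Set (ℤ × ℤ)) (x : ℤ × ℤ) : Prop :=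
  ∃ p ∈ L, ∃ q ∈ L, p ≠ q ∧ d p x ∧ d q x

lemma lineSkeleton_eq (d : ℤ × ℤ → ℤ × ℤ → Prop) (L : Set (ℤ × ℤ)) :
    lineSkeleton d L = minimalsUnder d {x | Cov d L x} := rfl

lemma helperNE_core {X Y : ℕ → ℤ} {r : ℕ} (hX : MonoOn X r) (hY : MonoOn Y r)
    {k s₁ t₁ s₂ t₂ : ℕ} {q : ℤ × ℤ}
    (hs₁1 : 1 ≤ s₁) (hs₁r : s₁ ≤ r) (ht₁1 : 1 ≤ t₁) (ht₁r : t₁ ≤ r)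
    (hs₂1 : 1 ≤ s₂) (hs₂r : s₂ ≤ r) (ht₂1 : 1 ≤ t₂) (ht₂r : t₂ ≤ r)
    (hsum₁ : s₁ + t₁ = k + 1) (hsum₂ : s₂ + t₂ = k + 1) (hlt : s₁ < s₂)
    (h1 : X s₁ ≤ q.1) (h2 : Y t₁ ≤ q.2) (h3 : X s₂ ≤ q.1) (h4 : Y t₂ ≤ q.2) :
    ∃ s t : ℕ, 2 ≤ s ∧ s ≤ r ∧ 2 ≤ t ∧ t ≤ r ∧ s + t = k + 2 ∧
      X s ≤ q.1 ∧ Y t ≤ q.2 ∧ Cov dirNE (SSet X Y r k) (X s, Y t) := by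
  have htlt : t₂ < t₁ := by omega
  refine ⟨s₂, t₂ + 1, by omega, hs₂r, by omega, by omega, by omega, h3, ?_, ?_⟩
  · exact le_trans (hY.le (by omega) ht₁r (by omega)) h2
  · refine ⟨(X (s₂ - 1), Y (t₂ + 1)),
      ⟨s₂ - 1, t₂ + 1, by omega, by omega, by omega, by omega, by omega, rfl⟩,
      (X s₂, Y t₂),
      ⟨s₂, t₂, hs₂1, hs₂r, ht₂1, ht₂r, by omega, rfl⟩, ?_, ?_, ?_⟩
    · intro h
      have hc := congrArg Prod.snd h
      simp only at hc
      have := hY t₂ (t₂ + 1) ht₂1 (by omega) (by omega)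
      omega
    · exact dirNE_intro (le_of_lt (hX (s₂ - 1) s₂ (by omega) hs₂r (by omega))) (le_refl _)
    · exact dirNE_intro (le_refl _) (hY.le ht₂1 (by omega) (by omega))

lemma helperNE {X Y : ℕ → ℤ} {r : ℕ} (hX : MonoOn X r) (hY : MonoOn Y r)
    {k : ℕ} {q : ℤ × ℤ} (hq : Cov dirNE (SSet X Y r k) q) :
    ∃ s t : ℕ, 2 ≤ s ∧ s ≤ r ∧ 2 ≤ t ∧ t ≤ r ∧ s + t = k + 2 ∧
      X s ≤ q.1 ∧ Y t ≤ q.2 ∧ Cov dirNE (SSet X Y r k) (X s, Y t) := by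
  obtain ⟨a, ⟨s₁, t₁, hs₁1, hs₁r, ht₁1, ht₁r, hsum₁, rfl⟩,
    b, ⟨s₂, t₂, hs₂1, hs₂r, ht₂1, ht₂r, hsum₂, rfl⟩, hab, hda, hdb⟩ := hq
  obtain ⟨h1, h2⟩ := dirNE_elim hda
  obtain ⟨h3, h4⟩ := dirNE_elim hdb
  simp only at h1 h2 h3 h4
  have hsum₁' : s₁ + t₁ = k + 1 := by omega
  have hsum₂' : s₂ + t₂ = k + 1 := by omega
  have hne : s₁ ≠ s₂ := by
    intro he
    have : t₁ = t₂ := by omega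
    subst he; subst this
    exact hab rfl
  rcases Nat.lt_or_ge s₁ s₂ with h | h
  · exact helperNE_core hX hY hs₁1 hs₁r ht₁1 ht₁r hs₂1 hs₂r ht₂1 ht₂r hsum₁' hsum₂' h h1 h2 h3 h4
  · exact helperNE_core hX hY hs₂1 hs₂r ht₂1 ht₂r hs₁1 hs₁r ht₁1 ht₁r hsum₂' hsum₁'
      (by omega) h3 h4 h1 h2

lemma helperSW_core {X Y : ℕ → ℤ} {r : ℕ} (hX : MonoOn X r) (hY : MonoOn Y r)
    {k s₁ t₁ s₂ t₂ : ℕ} {q : ℤ × ℤ}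
    (hs₁1 : 1 ≤ s₁) (hs₁r : s₁ ≤ r) (ht₁1 : 1 ≤ t₁) (ht₁r : t₁ ≤ r)
    (hs₂1 : 1 ≤ s₂) (hs₂r : s₂ ≤ r) (ht₂1 : 1 ≤ t₂) (ht₂r : t₂ ≤ r)
    (hsum₁ : s₁ + t₁ = k + 1) (hsum₂ : s₂ + t₂ = k + 1) (hlt : s₁ < s₂)
    (h1 : q.1 ≤ X s₁) (h2 : q.2 ≤ Y t₁) (h3 : q.1 ≤ X s₂) (h4 : q.2 ≤ Y t₂) :
    ∃ s t : ℕ, 1 ≤ s ∧ s ≤ r ∧ 1 ≤ t ∧ t ≤ r ∧ s + t = k ∧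
      q.1 ≤ X s ∧ q.2 ≤ Y t ∧ Cov dirSW (SSet X Y r k) (X s, Y t) := by
  have htlt : t₂ < t₁ := by omega
  refine ⟨s₁, t₁ - 1, hs₁1, hs₁r, by omega, by omega, by omega, h1, ?_, ?_⟩
  · exact le_trans h4 (hY.le ht₂1 (by omega) (by omega))
  · refine ⟨(X s₁, Y t₁),
      ⟨s₁, t₁, hs₁1, hs₁r, ht₁1, ht₁r, by omega, rfl⟩,
      (X (s₁ + 1), Y (t₁ - 1)),
      ⟨s₁ + 1, t₁ - 1, by omega, by omega, by omega, by omega, by omega, rfl⟩, ?_, ?_, ?_⟩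
    · intro h
      have hc := congrArg Prod.fst h
      simp only at hc
      have := hX s₁ (s₁ + 1) hs₁1 (by omega) (by omega)
      omega
    · exact dirSW_intro (le_refl _) (hY.le (by omega) ht₁r (by omega))
    · exact dirSW_intro (le_of_lt (hX s₁ (s₁ + 1) hs₁1 (by omega) (by omega))) (le_refl _)

lemma helperSW {X Y : ℕ → ℤ} {r : ℕ} (hX : MonoOn X r) (hY : MonoOn Y r)
    {k : ℕ} {q : ℤ × ℤ} (hq : Cov dirSW (SSet X Y r k) q) :
    ∃ s t : ℕ, 1 ≤ s ∧ s ≤ r ∧ 1 ≤ t ∧ t ≤ r ∧ s + t = k ∧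
      q.1 ≤ X s ∧ q.2 ≤ Y t ∧ Cov dirSW (SSet X Y r k) (X s, Y t) := by
  obtain ⟨a, ⟨s₁, t₁, hs₁1, hs₁r, ht₁1, ht₁r, hsum₁, rfl⟩,
    b, ⟨s₂, t₂, hs₂1, hs₂r, ht₂1, ht₂r, hsum₂, rfl⟩, hab, hda, hdb⟩ := hq
  obtain ⟨h1, h2⟩ := dirSW_elim hda
  obtain ⟨h3, h4⟩ := dirSW_elim hdb
  simp only at h1 h2 h3 h4
  have hsum₁' : s₁ + t₁ = k + 1 := by omega
  have hsum₂' : s₂ + t₂ = k + 1 := by omega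
  have hne : s₁ ≠ s₂ := by
    intro he
    have : t₁ = t₂ := by omega
    subst he; subst this
    exact hab rfl
  rcases Nat.lt_or_ge s₁ s₂ with h | h
  · exact helperSW_core hX hY hs₁1 hs₁r ht₁1 ht₁r hs₂1 hs₂r ht₂1 ht₂r hsum₁' hsum₂' h h1 h2 h3 h4
  · exact helperSW_core hX hY hs₂1 hs₂r ht₂1 ht₂r hs₁1 hs₁r ht₁1 ht₁r hsum₂' hsum₁'
      (by omega) h3 h4 h1 h2

lemma skelNE {X Y : ℕ → ℤ} {r : ℕ} (hX : MonoOn X r) (hY : MonoOn Y r)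
    (k : ℕ) (hk : r ≤ k) :
    lineSkeleton dirNE (SSet X Y r k) = SSet X Y r (k + 1) := by
  rw [lineSkeleton_eq]
  ext q
  constructor
  · rintro ⟨hqC, hmin⟩
    obtain ⟨s, t, hs2, hsr, ht2, htr, hsum, hq1, hq2, hcov⟩ := helperNE hX hY hqC
    have heq := hmin (X s, Y t) hcov (dirNE_intro hq1 hq2)
    exact ⟨s, t, by omega, hsr, by omega, htr, by omega, heq.symm⟩
  · rintro ⟨s, t, hs1, hsr, ht1, htr, hsum, rfl⟩
    have hsum' : s + t = k + 2 := by omega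
    have hs2 : 2 ≤ s := by omega
    have ht2 : 2 ≤ t := by omega
    refine ⟨⟨(X (s - 1), Y t),
      ⟨s - 1, t, by omega, by omega, ht1, htr, by omega, rfl⟩,
      (X s, Y (t - 1)),
      ⟨s, t - 1, hs1, hsr, by omega, by omega, by omega, rfl⟩, ?_, ?_, ?_⟩, ?_⟩
    · intro h
      have hc := congrArg Prod.fst h
      simp only at hc
      have := hX (s - 1) s (by omega) hsr (by omega)
      omega
    · exact dirNE_intro (le_of_lt (hX (s - 1) s (by omega) hsr (by omega))) (le_refl _)
    · exact dirNE_intro (le_refl _) (le_of_lt (hY (t - 1) t (by omega) htr (by omega)))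
    · intro q' hq'C hle
      obtain ⟨s', t', hs'2, hs'r, ht'2, ht'r, hsum'', hx', hy', _⟩ := helperNE hX hY hq'C
      obtain ⟨hle1, hle2⟩ := dirNE_elim hle
      simp only at hle1 hle2
      have hss : s' ≤ s := by
        by_contra hc
        push_neg at hc
        have := hX s s' (by omega) hs'r hc
        omega
      have htt : t' ≤ t := by
        by_contra hc
        push_neg at hc
        have := hY t t' (by omega) ht'r hc
        omega
      have hes : s' = s := by omega
      have het : t' = t := by omega
      subst hes; subst het
      have e1 : q'.1 = X s' := le_antisymm hle1 hx'
      have e2 : q'.2 = Y t' := le_antisymm hle2 hy'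
      exact Prod.ext e1 e2

lemma skelSW {X Y : ℕ → ℤ} {r : ℕ} (hX : MonoOn X r) (hY : MonoOn Y r)
    (k : ℕ) (hk1 : 1 ≤ k) (hkr : k ≤ r) :
    lineSkeleton dirSW (SSet X Y r k) = SSet X Y r (k - 1) := by
  rw [lineSkeleton_eq]
  ext q
  constructor
  · rintro ⟨hqC, hmin⟩
    obtain ⟨s, t, hs1, hsr, ht1, htr, hsum, hq1, hq2, hcov⟩ := helperSW hX hY hqC
    have heq := hmin (X s, Y t) hcov (dirSW_intro hq1 hq2)
    exact ⟨s, t, hs1, hsr, ht1, htr, by omega, heq.symm⟩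
  · rintro ⟨s, t, hs1, hsr, ht1, htr, hsum, rfl⟩
    have hsum' : s + t = k := by omega
    refine ⟨⟨(X (s + 1), Y t),
      ⟨s + 1, t, by omega, by omega, ht1, htr, by omega, rfl⟩,
      (X s, Y (t + 1)),
      ⟨s, t + 1, hs1, hsr, by omega, by omega, by omega, rfl⟩, ?_, ?_, ?_⟩, ?_⟩
    · intro h
      have hc := congrArg Prod.fst h
      simp only at hc
      have := hX s (s + 1) hs1 (by omega) (by omega)
      omega
    · exact dirSW_intro (le_of_lt (hX s (s + 1) hs1 (by omega) (by omega))) (le_refl _)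
    · exact dirSW_intro (le_refl _) (le_of_lt (hY t (t + 1) ht1 (by omega) (by omega)))
    · intro q' hq'C hle
      obtain ⟨s', t', hs'1, hs'r, ht'1, ht'r, hsum'', hx', hy', _⟩ := helperSW hX hY hq'C
      obtain ⟨hle1, hle2⟩ := dirSW_elim hle
      simp only at hle1 hle2
      have hss : s ≤ s' := by
        by_contra hc
        push_neg at hc
        have := hX s' s hs'1 hsr hc
        omega
      have htt : t ≤ t' := by
        by_contra hc
        push_neg at hc
        have := hY t' t ht'1 htr hc
        omega
      have hes : s' = s := by omega
      have het : t' = t := by omega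
      subst hes; subst het
      have e1 : q'.1 = X s' := le_antisymm hx' hle1
      have e2 : q'.2 = Y t' := le_antisymm hy' hle2
      exact Prod.ext e1 e2

/-- For `P, Q ∈ SYT(r × c)` and the point sets `S_{kj}` built from
entries of `Q` and `∂(P)` (with `S_{0,j} = S_{2r,j} = ∅`): for each `1 ≤ j ≤ c`, if
`r ≤ k ≤ 2r - 1` then `𝒮(S_{kj}, ↗) = S_{k+1,j}`, and if `1 ≤ k ≤ r` then
`𝒮(S_{kj}, ↙) = S_{k-1,j}`. -/
theorem lineSkeleton_Skj (r c : ℕ) (P Q : ℕ → ℕ → ℕ)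
    (hP : IsSYT r c P) (hQ : IsSYT r c Q) (k j : ℕ) (hj1 : 1 ≤ j) (hjc : j ≤ c) :
    (r ≤ k → k ≤ 2 * r - 1 →
      lineSkeleton dirNE (Skj r c P Q k j) = Skj r c P Q (k + 1) j) ∧
    (1 ≤ k → k ≤ r →
      lineSkeleton dirSW (Skj r c P Q k j) = Skj r c P Q (k - 1) j) := by
  have hSkj : ∀ m, Skj r c P Q m j = SSet (fun s => xEnt Q s j) (fun t => yEnt r c P t j) r m :=
    fun m => rfl
  have hX : MonoOn (fun s => xEnt Q s j) r :=
    fun s₁ s₂ h1 h2 h3 => xEnt_mono hQ hj1 hjc s₁ s₂ h1 h2 h3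
  have hY : MonoOn (fun t => yEnt r c P t j) r :=
    fun t₁ t₂ h1 h2 h3 => yEnt_mono P hj1 hjc t₁ t₂ h1 h2 h3
  constructor
  · intro hk _
    rw [hSkj k, hSkj (k + 1)]
    exact skelNE hX hY k hk
  · intro hk1 hkr
    rw [hSkj k, hSkj (k - 1)]
    exact skelSW hX hY k hk1 hkr

end PromRS
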